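/- Triangle Removal Lemma: For every ε > 0 there exists δ > 0 such that every finite simple graph G on N ≥ 1 vertices containing at most δ·N³ triangles can be made triangle-free by removing at most ε·N² edges; that is, there is a graph G' with the same vertex set, edge set contained in that of G, containing no triangle, and with |E(G) \ E(G')| ≤ ε·N². -/

import Mathlib

open Finset
open scoped Classical

/-- The set of 3-element vertex sets of `G` that form a triangle. -/
noncomputable def triangleFinset {V : Type*} [Fintype V] (G : SimpleGraph V) :
    Finset (Finset V) :=
  Finset.univ.filter fun T =>
    ∃ x y z : V, T = {x, y, z} ∧ G.Adj x y ∧ G.Adj y z ∧ G.Adj x z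

lemma triangleFinset_eq {V : Type*} [Fintype V] (G : SimpleGraph V) :
    triangleFinset G = G.cliqueFinset 3 := by
  ext T
  simp only [triangleFinset, SimpleGraph.mem_cliqueFinset_iff, mem_filter, mem_univ, true_and,
    SimpleGraph.is3Clique_iff]
  constructor
  · rintro ⟨x, y, z, rfl, h1, h2, h3⟩
    exact ⟨x, y, z, h1, h3, h2, rfl⟩
  · rintro ⟨x, y, z, h1, h2, h3, rfl⟩
    exact ⟨x, y, z, rfl, h1, h3, h2⟩

/-- The Triangle Removal Lemma. -/
theorem triangle_removal_lemma (ε : ℝ) (hε : 0 < ε) :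
    ∃ δ : ℝ, 0 < δ ∧ ∀ (V : Type) [Fintype V] (G : SimpleGraph V),
      1 ≤ Fintype.card V →
      ((triangleFinset G).card : ℝ) ≤ δ * (Fintype.card V : ℝ) ^ 3 →
      ∃ G' : SimpleGraph V, G' ≤ G ∧ triangleFinset G' = ∅ ∧
        ((G.edgeSet \ G'.edgeSet).ncard : ℝ) ≤ ε * (Fintype.card V : ℝ) ^ 2 := by
  set ε' : ℝ := min ε 1 with hε'def
  have hε'0 : 0 < ε' := lt_min hε one_pos
  have hε'1 : ε' ≤ 1 := min_le_right _ _
  refine ⟨SimpleGraph.triangleRemovalBound ε' / 2,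
    by have := SimpleGraph.triangleRemovalBound_pos hε'0; linarith, ?_⟩
  intro V _ G hN hcount
  have hNpos : (0 : ℝ) < (Fintype.card V : ℝ) ^ 3 := by
    have : (1 : ℝ) ≤ (Fintype.card V : ℝ) := by exact_mod_cast hN
    positivity
  have hlt : (#(G.cliqueFinset 3) : ℝ) <
      SimpleGraph.triangleRemovalBound ε' * (Fintype.card V) ^ 3 := by
    rw [← triangleFinset_eq]
    have hb := SimpleGraph.triangleRemovalBound_pos hε'0
    calc ((triangleFinset G).card : ℝ)
        ≤ SimpleGraph.triangleRemovalBound ε' / 2 * (Fintype.card V : ℝ) ^ 3 := hcount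
      _ < SimpleGraph.triangleRemovalBound ε' * (Fintype.card V) ^ 3 := by
          apply mul_lt_mul_of_pos_right _ hNpos
          linarith
  obtain ⟨G', hle, _, hcard, hfree⟩ := SimpleGraph.triangle_removal hlt
  refine ⟨G', hle, ?_, ?_⟩
  · rw [Finset.eq_empty_iff_forall_notMem]
    intro T hT
    simp only [triangleFinset, Finset.mem_filter, Finset.mem_univ, true_and] at hT
    obtain ⟨x, y, z, rfl, h1, h2, h3⟩ := hT
    exact hfree {x, y, z} (SimpleGraph.is3Clique_triple_iff.2 ⟨h1, h3, h2⟩)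
  · have hsub : G'.edgeFinset ⊆ G.edgeFinset := SimpleGraph.edgeFinset_mono hle
    have : (G.edgeSet \ G'.edgeSet).ncard = #G.edgeFinset - #G'.edgeFinset := by
      have : G.edgeSet \ G'.edgeSet = ↑(G.edgeFinset \ G'.edgeFinset) := by
        simp [Finset.coe_sdiff, SimpleGraph.coe_edgeFinset]
      rw [this, Set.ncard_coe_finset, card_sdiff_of_subset hsub]
    rw [this]
    push_cast [Nat.cast_sub (card_le_card hsub)]
    calc (#G.edgeFinset : ℝ) - #G'.edgeFinset ≤ ε' * (Fintype.card V) ^ 2 := by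
          exact_mod_cast hcard.le
      _ ≤ ε * (Fintype.card V) ^ 2 := by
          apply mul_le_mul_of_nonneg_right (min_le_left _ _) (by positivity)
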